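/- Let (G,Λ) be a self-similar k-graph that is G-cofinal, i.e., for every vertex v and every boundary path x ∈ ∂Λ there exist n ≤ d(x) and g ∈ G such that vΛ(g·x(n)) ≠ ∅. Then for all idempotents E = ι_λ and F = ι_γ in E(S_{G,Λ}) there exist finitely many elements F_1, …, F_l ∈ S_{G,Λ} such that {F_i E F_i*}_{i=1..l} is an outer cover for F: every nonzero idempotent E' ≤ F satisfies E'(F_i E F_i*) ≠ 0 for some i. -/

import Mathlib

/-- A `k`-graph: a countable small category with degree functor to `ℕ^k`
satisfying the unique factorization property.  Objects (vertices) are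
identified with the paths of degree `0`. -/
structure KGraph (k : ℕ) where
  Path : Type
  countable : Countable Path
  src : Path → Path
  rng : Path → Path
  deg : Path → Fin k → ℕ
  comp : (μ ν : Path) → src μ = rng ν → Path
  deg_src : ∀ μ, deg (src μ) = 0
  deg_rng : ∀ μ, deg (rng μ) = 0
  src_vtx : ∀ μ, deg μ = 0 → src μ = μ
  rng_vtx : ∀ μ, deg μ = 0 → rng μ = μ
  src_comp : ∀ μ ν h, src (comp μ ν h) = src ν
  rng_comp : ∀ μ ν h, rng (comp μ ν h) = rng μ
  deg_comp : ∀ μ ν h, deg (comp μ ν h) = deg μ + deg ν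
  comp_assoc : ∀ μ ν ρ (h1 : src μ = rng ν) (h2 : src (comp μ ν h1) = rng ρ)
    (h3 : src ν = rng ρ) (h4 : src μ = rng (comp ν ρ h3)),
    comp (comp μ ν h1) ρ h2 = comp μ (comp ν ρ h3) h4
  rng_id_comp : ∀ μ (h : src (rng μ) = rng μ), comp (rng μ) μ h = μ
  comp_src_id : ∀ μ (h : src μ = rng (src μ)), comp μ (src μ) h = μ
  factor : ∀ μ (m n : Fin k → ℕ), deg μ = m + n →
    ∃! p : Path × Path, ∃ h : src p.1 = rng p.2,
      deg p.1 = m ∧ deg p.2 = n ∧ comp p.1 p.2 h = μ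

namespace KGraph

variable {k : ℕ}

/-- The set `Λ^min(μ,ν)` of pairs `(α,β)` with `μα = νβ` a minimal common
extension of `μ` and `ν`. -/
def lmin (Λ : KGraph k) (μ ν : Λ.Path) : Set (Λ.Path × Λ.Path) :=
  {p | ∃ (h1 : Λ.src μ = Λ.rng p.1) (h2 : Λ.src ν = Λ.rng p.2),
    Λ.comp μ p.1 h1 = Λ.comp ν p.2 h2 ∧
    Λ.deg μ + Λ.deg p.1 = Λ.deg μ ⊔ Λ.deg ν}

/-- `Λ` is finitely aligned when every `Λ^min(μ,ν)` is finite. -/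
def FinitelyAligned (Λ : KGraph k) : Prop := ∀ μ ν : Λ.Path, (Λ.lmin μ ν).Finite

/-- `X ⊆ vΛ` is exhaustive: every path with range `v` has a minimal common
extension with some member of `X`. -/
def Exhaustive (Λ : KGraph k) (v : Λ.Path) (X : Set Λ.Path) : Prop :=
  ∀ lam : Λ.Path, Λ.rng lam = v → ∃ τ ∈ X, Λ.lmin lam τ ≠ ∅

/-- `Λ` is row finite: finitely many edges of each colour into each vertex. -/
def RowFinite (Λ : KGraph k) : Prop :=
  ∀ v : Λ.Path, Λ.deg v = 0 → ∀ i : Fin k,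
    {e : Λ.Path | Λ.deg e = Pi.single i 1 ∧ Λ.rng e = v}.Finite

/-- `Λ` has no sources: every vertex receives an edge of each colour. -/
def NoSources (Λ : KGraph k) : Prop :=
  ∀ v : Λ.Path, Λ.deg v = 0 → ∀ i : Fin k,
    {e : Λ.Path | Λ.deg e = Pi.single i 1 ∧ Λ.rng e = v}.Nonempty

end KGraph

/-- A self-similar `k`-graph `(G,Λ,φ)`. -/
structure SelfSimilar (k : ℕ) (G : Type) [Group G] (Λ : KGraph k) where
  act : G → Λ.Path → Λ.Path
  φ : G → Λ.Path → G
  act_one : ∀ μ, act 1 μ = μ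
  act_mul : ∀ g h μ, act (g * h) μ = act g (act h μ)
  deg_act : ∀ g μ, Λ.deg (act g μ) = Λ.deg μ
  src_act : ∀ g μ, Λ.src (act g μ) = act g (Λ.src μ)
  rng_act : ∀ g μ, Λ.rng (act g μ) = act g (Λ.rng μ)
  φ_mul : ∀ g h μ, φ (g * h) μ = φ g (act h μ) * φ h μ
  act_comp : ∀ g μ ν (h : Λ.src μ = Λ.rng ν)
      (h' : Λ.src (act g μ) = Λ.rng (act (φ g μ) ν)),
      act g (Λ.comp μ ν h) = Λ.comp (act g μ) (act (φ g μ) ν) h'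
  φ_comp : ∀ g μ ν (h : Λ.src μ = Λ.rng ν),
      φ g (Λ.comp μ ν h) = φ (φ g μ) ν
  φ_vtx : ∀ g v, Λ.deg v = 0 → φ g v = g

variable {k : ℕ} {G : Type} [Group G] {Λ : KGraph k}

/-- Orthogonality of two triples: `Λ^min(μ,ξ) = Λ^min(ν,η) = ∅`. -/
def Orth (Λ : KGraph k) (t u : Λ.Path × G × Λ.Path) : Prop :=
  Λ.lmin t.1 u.1 = ∅ ∧ Λ.lmin t.2.2 u.2.2 = ∅

/-- Membership in `S_{G,Λ}`: a finite set of pairwise orthogonal triples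
`(μ,g,ν)` with `s(μ) = g⬝s(ν)`. -/
def IsElem (SS : SelfSimilar k G Λ) (F : Set (Λ.Path × G × Λ.Path)) : Prop :=
  F.Finite ∧ (∀ t ∈ F, Λ.src t.1 = SS.act t.2.1 (Λ.src t.2.2)) ∧
    ∀ t ∈ F, ∀ u ∈ F, t ≠ u → Orth Λ t u

/-- The multiplication of `S_{G,Λ}`. -/
def smul (SS : SelfSimilar k G Λ) (E F : Set (Λ.Path × G × Λ.Path)) :
    Set (Λ.Path × G × Λ.Path) :=
  {t | ∃ μ g ν ξ h η α β, (μ, g, ν) ∈ E ∧ (ξ, h, η) ∈ F ∧ (α, β) ∈ Λ.lmin ν ξ ∧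
    ∃ (h1 : Λ.src μ = Λ.rng (SS.act g α)) (h2 : Λ.src η = Λ.rng (SS.act h⁻¹ β)),
      t = (Λ.comp μ (SS.act g α) h1,
           SS.φ g α * SS.φ h (SS.act h⁻¹ β),
           Λ.comp η (SS.act h⁻¹ β) h2)}

/-- The involution `F* = {(ν,g⁻¹,μ) : (μ,g,ν) ∈ F}`. -/
def sstar (F : Set (Λ.Path × G × Λ.Path)) : Set (Λ.Path × G × Λ.Path) :=
  {t | (t.2.2, t.2.1⁻¹, t.1) ∈ F}

/-- The singleton idempotent `ι_μ = {(μ,e_G,μ)}`. -/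
def iota (Λ : KGraph k) (G : Type) [Group G] (μ : Λ.Path) :
    Set (Λ.Path × G × Λ.Path) := {(μ, (1 : G), μ)}

/-- Idempotents of `S_{G,Λ}`. -/
def IsIdem (SS : SelfSimilar k G Λ) (E : Set (Λ.Path × G × Λ.Path)) : Prop :=
  IsElem SS E ∧ smul SS E E = E

/-- The natural partial order of the inverse semigroup `S_{G,Λ}`:
`s ≤ t` iff `s = te` for some idempotent `e`. -/
def leS (SS : SelfSimilar k G Λ) (s t : Set (Λ.Path × G × Λ.Path)) : Prop :=
  ∃ E, IsIdem SS E ∧ smul SS t E = s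

/-- `τ` is strongly fixed by `g`. -/
def StronglyFixed (SS : SelfSimilar k G Λ) (g : G) (τ : Λ.Path) : Prop :=
  SS.act g τ = τ ∧ SS.φ g τ = 1

/-- The set `SF_g` of paths strongly fixed by `g`. -/
def SFg (SS : SelfSimilar k G Λ) (g : G) : Set Λ.Path :=
  {τ | SS.act g τ = τ ∧ SS.φ g τ = 1}

/-- `SF_g` is locally exhausted. -/
def LocallyExhausted (SS : SelfSimilar k G Λ) (g : G) : Prop :=
  ∀ v : Λ.Path, Λ.deg v = 0 →
    ∃ M : Set Λ.Path, M.Finite ∧ (∀ τ ∈ M, τ ∈ SFg SS g ∧ Λ.rng τ = v) ∧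
      ∀ τ ∈ SFg SS g, Λ.rng τ = v → ∃ τ' ∈ M, Λ.lmin τ τ' ≠ ∅

/-- The principal ideal `J_F` admits a finite cover. -/
def HasFiniteCover (SS : SelfSimilar k G Λ) (F : Set (Λ.Path × G × Λ.Path)) : Prop :=
  ∃ C : Set (Set (Λ.Path × G × Λ.Path)), C.Finite ∧
    (∀ E ∈ C, IsIdem SS E ∧ smul SS F E = E) ∧
    ∀ E, IsIdem SS E → smul SS F E = E → E ≠ ∅ → ∃ E' ∈ C, smul SS E E' ≠ ∅

/-- A (proper, nonzero) filter in the idempotent semilattice `E(S_{G,Λ})`. -/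
def IsFilterE (SS : SelfSimilar k G Λ) (𝓕 : Set (Set (Λ.Path × G × Λ.Path))) : Prop :=
  𝓕.Nonempty ∧ (∀ E ∈ 𝓕, IsIdem SS E) ∧ (∅ ∉ 𝓕) ∧
    (∀ E ∈ 𝓕, ∀ F ∈ 𝓕, smul SS E F ∈ 𝓕) ∧
    ∀ E ∈ 𝓕, ∀ F, IsIdem SS F → smul SS F E = E → F ∈ 𝓕

/-- An ultrafilter: a maximal filter in `E(S_{G,Λ})`. -/
def IsUltrafilterE (SS : SelfSimilar k G Λ) (𝓕 : Set (Set (Λ.Path × G × Λ.Path))) : Prop :=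
  IsFilterE SS 𝓕 ∧ ∀ 𝓖, IsFilterE SS 𝓖 → 𝓕 ⊆ 𝓖 → 𝓖 = 𝓕

/-- `n ≤ m` for `m ∈ (ℕ ∪ {∞})^k` and `n ∈ ℕ^k`. -/
def LeDeg {k : ℕ} (m : Fin k → ℕ∞) (n : Fin k → ℕ) : Prop :=
  ∀ i, (n i : ℕ∞) ≤ m i

/-- A boundary path `x` of a finitely aligned `k`-graph, recorded via its
degree `d(x) ∈ (ℕ∪{∞})^k` and its initial segments `x(0,n)` for `n ≤ d(x)`. -/
structure BoundaryPath (Λ : KGraph k) where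
  bdeg : Fin k → ℕ∞
  seg : (Fin k → ℕ) → Λ.Path
  deg_seg : ∀ n, LeDeg bdeg n → Λ.deg (seg n) = n
  rng_seg : ∀ n, LeDeg bdeg n → Λ.rng (seg n) = seg 0
  seg_comp : ∀ m n : Fin k → ℕ, LeDeg bdeg (m + n) →
    ∃ (τ : Λ.Path) (h : Λ.src (seg m) = Λ.rng τ),
      Λ.deg τ = n ∧ seg (m + n) = Λ.comp (seg m) τ h
  seg_junk : ∀ n, ¬ LeDeg bdeg n → seg n = seg 0
  boundary : ∀ n, LeDeg bdeg n → ∀ X : Set Λ.Path, X.Finite →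
    (∀ τ ∈ X, Λ.rng τ = Λ.src (seg n) ∧ τ ≠ Λ.src (seg n)) →
    KGraph.Exhaustive Λ (Λ.src (seg n)) X →
    ∃ τ ∈ X, ∃ (_ : LeDeg bdeg (n + Λ.deg τ)) (h : Λ.src (seg n) = Λ.rng τ),
      seg (n + Λ.deg τ) = Λ.comp (seg n) τ h

/-- `z = σ^n(x)`, the shift of the boundary path `x` by `n`. -/
def IsShift (Λ : KGraph k) (x : BoundaryPath Λ) (n : Fin k → ℕ)
    (z : BoundaryPath Λ) : Prop :=
  (∀ i, z.bdeg i = x.bdeg i - (n i : ℕ∞)) ∧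
    ∀ p, LeDeg z.bdeg p → ∃ h : Λ.src (x.seg n) = Λ.rng (z.seg p),
      x.seg (n + p) = Λ.comp (x.seg n) (z.seg p) h

/-- `z = g⬝x` for boundary paths. -/
def IsActB (SS : SelfSimilar k G Λ) (g : G) (x z : BoundaryPath Λ) : Prop :=
  z.bdeg = x.bdeg ∧ ∀ p, LeDeg x.bdeg p → z.seg p = SS.act g (x.seg p)

/-- `y = lam⬝z`, the concatenation of a finite path with a boundary path. -/
def IsCompB (Λ : KGraph k) (lam : Λ.Path) (z y : BoundaryPath Λ) : Prop :=
  (∀ i, y.bdeg i = (Λ.deg lam i : ℕ∞) + z.bdeg i) ∧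
    ∀ p, LeDeg z.bdeg p → ∃ h : Λ.src lam = Λ.rng (z.seg p),
      y.seg (Λ.deg lam + p) = Λ.comp lam (z.seg p) h

/-- `x ∈ Z(lam)`, i.e. `x(0,d(lam)) = lam`. -/
def InZ (Λ : KGraph k) (x : BoundaryPath Λ) (lam : Λ.Path) : Prop :=
  LeDeg x.bdeg (Λ.deg lam) ∧ x.seg (Λ.deg lam) = lam

/-- `y` is a fixed point for `θ_{{(μ,g,ν)}}`: `y ∈ Z(ν)` and `μ(g⬝σ^{d(ν)}(y)) = y`. -/
def FixedPt (SS : SelfSimilar k G Λ) (μ : Λ.Path) (g : G) (ν : Λ.Path)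
    (y : BoundaryPath Λ) : Prop :=
  InZ Λ y ν ∧ ∃ z w, IsShift Λ y (Λ.deg ν) z ∧ IsActB SS g z w ∧ IsCompB Λ μ w y

/-- `y` is an interior fixed point for `θ_{{(μ,g,ν)}}`: some cylinder containing
`y` consists entirely of fixed points. -/
def InteriorFixedPt (SS : SelfSimilar k G Λ) (μ : Λ.Path) (g : G) (ν : Λ.Path)
    (y : BoundaryPath Λ) : Prop :=
  ∃ η : Λ.Path, InZ Λ y η ∧ ∀ y', InZ Λ y' η → FixedPt SS μ g ν y'

/-- `G`-aperiodic condition (A). -/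
def CondA (SS : SelfSimilar k G Λ) : Prop :=
  ∀ v : Λ.Path, Λ.deg v = 0 → ∃ x : BoundaryPath Λ, x.seg 0 = v ∧
    ∀ (m n : Fin k → ℕ), LeDeg x.bdeg m → LeDeg x.bdeg n →
      ∀ (g : G) (z w : BoundaryPath Λ),
        IsShift Λ x m z → IsShift Λ x n w → IsActB SS g w z → m = n

/-- `(G,Λ)` is `G`-cofinal. -/
def GCofinal (SS : SelfSimilar k G Λ) : Prop :=
  ∀ v : Λ.Path, Λ.deg v = 0 → ∀ x : BoundaryPath Λ,
    ∃ n : Fin k → ℕ, LeDeg x.bdeg n ∧ ∃ (g : G) (p : Λ.Path),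
      Λ.rng p = v ∧ Λ.src p = SS.act g (Λ.src (x.seg n))

/-- The ultrafilter `F_x` associated to a boundary path `x`. -/
def Fx (SS : SelfSimilar k G Λ) (x : BoundaryPath Λ) :
    Set (Set (Λ.Path × G × Λ.Path)) :=
  {E | IsIdem SS E ∧ ∃ n : Fin k → ℕ, LeDeg x.bdeg n ∧
    (x.seg n, (1 : G), x.seg n) ∈ E}


/-! ### Auxiliary infrastructure for the proof of Statement 18 -/

namespace KGraph

variable {k : ℕ} {Λ : KGraph k}

lemma src_src (μ : Λ.Path) : Λ.src (Λ.src μ) = Λ.src μ := Λ.src_vtx _ (Λ.deg_src μ)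
lemma rng_src (μ : Λ.Path) : Λ.rng (Λ.src μ) = Λ.src μ := Λ.rng_vtx _ (Λ.deg_src μ)
lemma src_rng (μ : Λ.Path) : Λ.src (Λ.rng μ) = Λ.rng μ := Λ.src_vtx _ (Λ.deg_rng μ)

/-- `a` is an extension of `b` (i.e. `b` is an initial segment of `a`). -/
def PExt (Λ : KGraph k) (a b : Λ.Path) : Prop :=
  ∃ (δ : Λ.Path) (h : Λ.src b = Λ.rng δ), a = Λ.comp b δ h

lemma pext_refl (a : Λ.Path) : Λ.PExt a a :=
  ⟨Λ.src a, (Λ.rng_src a).symm, (Λ.comp_src_id a _).symm⟩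

lemma pext_trans {a b c : Λ.Path} : Λ.PExt a b → Λ.PExt b c → Λ.PExt a c := by
  rintro ⟨δ, hδ, rfl⟩ ⟨ε, hε, rfl⟩
  have h3 : Λ.src ε = Λ.rng δ := by rw [← Λ.src_comp c ε hε]; exact hδ
  have h4 : Λ.src c = Λ.rng (Λ.comp ε δ h3) := by rw [Λ.rng_comp]; exact hε
  exact ⟨Λ.comp ε δ h3, h4, Λ.comp_assoc c ε δ hε hδ h3 h4⟩

lemma pext_deg_le {a b : Λ.Path} (h : Λ.PExt a b) : Λ.deg b ≤ Λ.deg a := by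
  obtain ⟨δ, hδ, rfl⟩ := h; rw [Λ.deg_comp]; exact le_self_add

lemma pext_rng {a b : Λ.Path} (h : Λ.PExt a b) : Λ.rng a = Λ.rng b := by
  obtain ⟨δ, hδ, rfl⟩ := h; exact Λ.rng_comp ..

lemma pext_unique {a w1 w2 : Λ.Path} (h1 : Λ.PExt a w1) (h2 : Λ.PExt a w2)
    (hd : Λ.deg w1 = Λ.deg w2) : w1 = w2 := by
  obtain ⟨δ1, hδ1, rfl⟩ := h1
  obtain ⟨δ2, hδ2, he⟩ := h2
  have hd1 := Λ.deg_comp w1 δ1 hδ1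
  have hd2 := Λ.deg_comp w2 δ2 hδ2
  rw [← he] at hd2
  have h2d : Λ.deg δ2 = Λ.deg δ1 := by
    have h' : Λ.deg w1 + Λ.deg δ1 = Λ.deg w2 + Λ.deg δ2 := by rw [← hd1, hd2]
    rw [hd] at h'
    exact (add_left_cancel h').symm
  obtain ⟨p, hp, hup⟩ := Λ.factor (Λ.comp w1 δ1 hδ1) (Λ.deg w1) (Λ.deg δ1) hd1
  have e1 : (w1, δ1) = p := hup (w1, δ1) ⟨hδ1, rfl, rfl, rfl⟩
  have e2 : (w2, δ2) = p := hup (w2, δ2) ⟨hδ2, hd.symm, h2d, he.symm⟩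
  exact congrArg Prod.fst (e1.trans e2.symm)

open Classical in
/-- Truncation of a path to degree `n`. -/
noncomputable def ptrunc (Λ : KGraph k) (a : Λ.Path) (n : Fin k → ℕ) : Λ.Path :=
  if h : n ≤ Λ.deg a then
    (Λ.factor a n (Λ.deg a - n)
      (by funext i; exact (Nat.add_sub_cancel' (h i)).symm)).exists.choose.1
  else a

lemma ptrunc_spec {a : Λ.Path} {n : Fin k → ℕ} (h : n ≤ Λ.deg a) :
    Λ.deg (Λ.ptrunc a n) = n ∧ Λ.PExt a (Λ.ptrunc a n) := by
  rw [ptrunc, dif_pos h]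
  obtain ⟨h1, h2, h3, h4⟩ := (Λ.factor a n (Λ.deg a - n)
      (by funext i; exact (Nat.add_sub_cancel' (h i)).symm)).exists.choose_spec
  exact ⟨h2, _, h1, h4.symm⟩

lemma deg_ptrunc {a : Λ.Path} {n : Fin k → ℕ} (h : n ≤ Λ.deg a) :
    Λ.deg (Λ.ptrunc a n) = n := (ptrunc_spec h).1

lemma pext_ptrunc {a : Λ.Path} {n : Fin k → ℕ} (h : n ≤ Λ.deg a) :
    Λ.PExt a (Λ.ptrunc a n) := (ptrunc_spec h).2

lemma ptrunc_eq {a w : Λ.Path} {n : Fin k → ℕ} (hw : Λ.deg w = n) (he : Λ.PExt a w) :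
    Λ.ptrunc a n = w := by
  have hn : n ≤ Λ.deg a := hw ▸ pext_deg_le he
  exact pext_unique (pext_ptrunc hn) he ((deg_ptrunc hn).trans hw.symm)

lemma ptrunc_zero (a : Λ.Path) : Λ.ptrunc a 0 = Λ.rng a :=
  ptrunc_eq (Λ.deg_rng a) ⟨a, Λ.src_rng a, (Λ.rng_id_comp a _).symm⟩

lemma ptrunc_stable {a' a : Λ.Path} {n : Fin k → ℕ} (h : Λ.PExt a' a) (hn : n ≤ Λ.deg a) :
    Λ.ptrunc a' n = Λ.ptrunc a n :=
  ptrunc_eq (deg_ptrunc hn) (pext_trans h (pext_ptrunc hn))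

lemma pext_ptrunc_ptrunc {a : Λ.Path} {m n : Fin k → ℕ} (hmn : m ≤ n) (hn : n ≤ Λ.deg a) :
    Λ.PExt (Λ.ptrunc a n) (Λ.ptrunc a m) := by
  have h1 : m ≤ Λ.deg (Λ.ptrunc a n) := by rw [deg_ptrunc hn]; exact hmn
  have e : Λ.ptrunc a m = Λ.ptrunc (Λ.ptrunc a n) m := ptrunc_stable (pext_ptrunc hn) h1
  rw [e]; exact pext_ptrunc h1

lemma lmin_nonempty_of_common {c μ e : Λ.Path} (hc : Λ.PExt e c) (hμ : Λ.PExt e μ) :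
    (Λ.lmin c μ).Nonempty := by
  have hse : Λ.deg c ⊔ Λ.deg μ ≤ Λ.deg e := sup_le (pext_deg_le hc) (pext_deg_le hμ)
  have hc' : Λ.ptrunc e (Λ.deg c) = c := ptrunc_eq rfl hc
  have hμ' : Λ.ptrunc e (Λ.deg μ) = μ := ptrunc_eq rfl hμ
  have h1 : Λ.PExt (Λ.ptrunc e (Λ.deg c ⊔ Λ.deg μ)) c := by
    have := pext_ptrunc_ptrunc (a := e) le_sup_left hse
    rwa [hc'] at this
  have h2 : Λ.PExt (Λ.ptrunc e (Λ.deg c ⊔ Λ.deg μ)) μ := by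
    have := pext_ptrunc_ptrunc (a := e) le_sup_right hse
    rwa [hμ'] at this
  obtain ⟨α, hα, he1⟩ := h1
  obtain ⟨β, hβ, he2⟩ := h2
  refine ⟨(α, β), hα, hβ, he1.symm.trans he2, ?_⟩
  have hh := Λ.deg_comp c α hα
  rw [← he1, deg_ptrunc hse] at hh
  exact hh.symm

lemma comp_vertex_eq {a w : Λ.Path} (hw : w = Λ.src a) (h : Λ.src a = Λ.rng w) :
    Λ.comp a w h = a := by
  subst hw; exact Λ.comp_src_id a h

lemma comp_cast {a w w' : Λ.Path} (e : w = w') (h : Λ.src a = Λ.rng w)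
    (h' : Λ.src a = Λ.rng w') : Λ.comp a w h = Λ.comp a w' h' := by
  subst e; rfl

lemma comp_cast_left {a a' w : Λ.Path} (e : a = a') (h : Λ.src a = Λ.rng w)
    (h' : Λ.src a' = Λ.rng w) : Λ.comp a w h = Λ.comp a' w h' := by
  subst e; rfl

lemma pext_comp_left {w u u' : Λ.Path} (hE : Λ.PExt u u') (h : Λ.src w = Λ.rng u)
    (h' : Λ.src w = Λ.rng u') : Λ.PExt (Λ.comp w u h) (Λ.comp w u' h') := by
  obtain ⟨δ, hδ, rfl⟩ := hE
  have h2 : Λ.src (Λ.comp w u' h') = Λ.rng δ := by rw [Λ.src_comp]; exact hδ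
  exact ⟨δ, h2, (Λ.comp_assoc w u' δ h' h2 hδ h).symm⟩

end KGraph

namespace KGraph

variable {k : ℕ} {Λ : KGraph k}

/-- `M` covers all extensions of `b`: every extension of `b` has a common
extension with some member of `M`. -/
def PCovers (Λ : KGraph k) (M : Set Λ.Path) (b : Λ.Path) : Prop :=
  ∀ c, Λ.PExt c b → ∃ μ ∈ M, ∃ e, Λ.PExt e c ∧ Λ.PExt e μ

/-- `b` is good (relative to `R`): no finite subset of `R` covers all its
extensions. -/
def PGood (Λ : KGraph k) (R : Set Λ.Path) (b : Λ.Path) : Prop :=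
  ¬ ∃ M : Set Λ.Path, M.Finite ∧ M ⊆ R ∧ Λ.PCovers M b

lemma pgood_of_pext {R : Set Λ.Path} {a b : Λ.Path} (hg : Λ.PGood R a)
    (h : Λ.PExt a b) : Λ.PGood R b := by
  rintro ⟨M, h1, h2, h3⟩
  exact hg ⟨M, h1, h2, fun c hc => h3 c (pext_trans hc h)⟩

lemma not_pgood_of_mem {R : Set Λ.Path} {μ : Λ.Path} (hμ : μ ∈ R) : ¬ Λ.PGood R μ := by
  intro hg
  exact hg ⟨{μ}, Set.finite_singleton μ, Set.singleton_subset_iff.mpr hμ,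
    fun c hc => ⟨μ, rfl, c, pext_refl c, hc⟩⟩

/-- The key extension step: a good path can be extended, through any finite
exhaustive set at the source of any of its initial segments, to a good path. -/
lemma pgood_step (hfa : Λ.FinitelyAligned) {R : Set Λ.Path} {w q : Λ.Path}
    (hw : Λ.src w = Λ.rng q) (hGood : Λ.PGood R (Λ.comp w q hw))
    {X : Set Λ.Path} (hX : X.Finite) (hexh : Λ.Exhaustive (Λ.src w) X) :
    ∃ τ ∈ X, ∃ (hτ : Λ.src w = Λ.rng τ) (c : Λ.Path),
      Λ.PGood R c ∧ Λ.PExt c (Λ.comp w q hw) ∧ Λ.PExt c (Λ.comp w τ hτ) := by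
  classical
  by_contra hcon
  set b := Λ.comp w q hw with hb
  set P : Set (Λ.Path × Λ.Path × Λ.Path) :=
    {pr | pr.1 ∈ X ∧ pr.2 ∈ Λ.lmin q pr.1} with hP
  have hPfin : P.Finite := by
    have hsub : P ⊆ X ×ˢ (⋃ τ ∈ X, Λ.lmin q τ) := by
      rintro ⟨τ, ab⟩ ⟨h1, h2⟩
      exact ⟨h1, Set.mem_biUnion h1 h2⟩
    exact Set.Finite.subset (hX.prod (hX.biUnion fun τ _ => hfa q τ)) hsub
  have hch : ∀ pr : Λ.Path × Λ.Path × Λ.Path, ∃ M : Set Λ.Path, M.Finite ∧ M ⊆ R ∧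
      (pr ∈ P → ∀ hs : Λ.src b = Λ.rng pr.2.1, Λ.PCovers M (Λ.comp b pr.2.1 hs)) := by
    intro pr
    by_cases hpr : pr ∈ P ∧ Λ.src b = Λ.rng pr.2.1
    · obtain ⟨hprP, hs⟩ := hpr
      obtain ⟨hτX, hlm⟩ := hprP
      obtain ⟨l1, l2, lc, ld⟩ := hlm
      have hng : ¬ Λ.PGood R (Λ.comp b pr.2.1 hs) := by
        intro hGc
        have hτ : Λ.src w = Λ.rng pr.1 := by
          have hr := congrArg Λ.rng lc
          rw [Λ.rng_comp, Λ.rng_comp] at hr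
          rw [← hr]; exact hw
        have h3 : Λ.src q = Λ.rng pr.2.1 := by rw [← Λ.src_comp w q hw]; exact hs
        have h4 : Λ.src w = Λ.rng (Λ.comp q pr.2.1 h3) := by rw [Λ.rng_comp]; exact hw
        have e1 : Λ.comp b pr.2.1 hs = Λ.comp w (Λ.comp q pr.2.1 h3) h4 :=
          Λ.comp_assoc w q pr.2.1 hw hs h3 h4
        have hExtu : Λ.PExt (Λ.comp q pr.2.1 h3) pr.1 := ⟨pr.2.2, l2, lc⟩
        have hE2 := pext_comp_left hExtu h4 hτ
        rw [← e1] at hE2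
        exact hcon ⟨pr.1, hτX, hτ, Λ.comp b pr.2.1 hs, hGc, ⟨pr.2.1, hs, rfl⟩, hE2⟩
      obtain ⟨M, hMf, hMR, hMc⟩ := not_not.mp hng
      exact ⟨M, hMf, hMR, fun _ _ => hMc⟩
    · refine ⟨∅, Set.finite_empty, Set.empty_subset _, fun hprP hs => ?_⟩
      exact absurd ⟨hprP, hs⟩ hpr
  choose Mf hMfin hMR hMcov using hch
  refine hGood ⟨⋃ pr ∈ P, Mf pr, hPfin.biUnion fun pr _ => hMfin pr,
    Set.iUnion₂_subset fun pr _ => hMR pr, ?_⟩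
  rintro c ⟨ζ, hζ, rfl⟩
  have h' : Λ.src q = Λ.rng ζ := by rw [← Λ.src_comp w q hw]; exact hζ
  have hwqζ : Λ.src w = Λ.rng (Λ.comp q ζ h') := by rw [Λ.rng_comp]; exact hw
  have hcw : Λ.comp b ζ hζ = Λ.comp w (Λ.comp q ζ h') hwqζ :=
    Λ.comp_assoc w q ζ hw hζ h' hwqζ
  obtain ⟨τ, hτX, hlmne⟩ := hexh (Λ.comp q ζ h') (by rw [Λ.rng_comp]; exact hw.symm)
  obtain ⟨⟨α', β'⟩, hα'1, hβ'1, hc', hd'⟩ := Set.nonempty_iff_ne_empty.mpr hlmne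
  set E := Λ.comp (Λ.comp q ζ h') α' hα'1 with hE
  have h3 : Λ.src ζ = Λ.rng α' := by rw [← Λ.src_comp q ζ h']; exact hα'1
  have h4 : Λ.src q = Λ.rng (Λ.comp ζ α' h3) := by rw [Λ.rng_comp]; exact h'
  have hEq : Λ.PExt E q := ⟨Λ.comp ζ α' h3, h4, Λ.comp_assoc q ζ α' h' hα'1 h3 h4⟩
  have hEτ : Λ.PExt E τ := ⟨β', hβ'1, hc'⟩
  have hse : Λ.deg q ⊔ Λ.deg τ ≤ Λ.deg E := sup_le (pext_deg_le hEq) (pext_deg_le hEτ)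
  have hfq : Λ.PExt (Λ.ptrunc E (Λ.deg q ⊔ Λ.deg τ)) q := by
    have := pext_ptrunc_ptrunc (a := E) le_sup_left hse
    rwa [ptrunc_eq rfl hEq] at this
  have hfτ : Λ.PExt (Λ.ptrunc E (Λ.deg q ⊔ Λ.deg τ)) τ := by
    have := pext_ptrunc_ptrunc (a := E) le_sup_right hse
    rwa [ptrunc_eq rfl hEτ] at this
  obtain ⟨α, hαq, hfα⟩ := hfq
  obtain ⟨β, hβτ, hfβ⟩ := hfτ
  have hlm : (α, β) ∈ Λ.lmin q τ := by
    refine ⟨hαq, hβτ, hfα.symm.trans hfβ, ?_⟩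
    have hh := Λ.deg_comp q α hαq
    rw [← hfα, deg_ptrunc hse] at hh
    exact hh.symm
  have pP : (τ, α, β) ∈ P := ⟨hτX, hlm⟩
  have hs2 : Λ.src b = Λ.rng α := by rw [hb, Λ.src_comp]; exact hαq
  have hwE : Λ.src w = Λ.rng E := by rw [hE, Λ.rng_comp, Λ.rng_comp]; exact hw
  -- e := comp w E is a common extension of c and comp b α
  have hEqζ : Λ.PExt E (Λ.comp q ζ h') := ⟨α', hα'1, rfl⟩
  have hec : Λ.PExt (Λ.comp w E hwE) (Λ.comp b ζ hζ) := by
    have := pext_comp_left hEqζ hwE hwqζ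
    rwa [← hcw] at this
  have h4' : Λ.src w = Λ.rng (Λ.comp q α hαq) := by rw [Λ.rng_comp]; exact hw
  have hcand : Λ.comp b α hs2 = Λ.comp w (Λ.comp q α hαq) h4' :=
    Λ.comp_assoc w q α hw hs2 hαq h4'
  have hEf' : Λ.PExt E (Λ.comp q α hαq) := by
    have := pext_ptrunc hse
    rwa [hfα] at this
  have heband : Λ.PExt (Λ.comp w E hwE) (Λ.comp b α hs2) := by
    have := pext_comp_left hEf' hwE h4'
    rwa [← hcand] at this
  obtain ⟨μ, hμ, e', he'1, he'2⟩ := hMcov (τ, α, β) pP hs2 (Λ.comp w E hwE) heband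
  exact ⟨μ, Set.mem_biUnion pP hμ, e', pext_trans he'1 hec, he'2⟩

end KGraph

namespace KGraph

variable {k : ℕ} {Λ : KGraph k}

open Classical in
/-- The recursive chain of good paths used to build a boundary path. -/
noncomputable def chainF (Λ : KGraph k) (R : Set Λ.Path)
    (f : ℕ → (Fin k → ℕ) × Finset Λ.Path) (a0 : Λ.Path) (h0 : Λ.PGood R a0) :
    ℕ → {b : Λ.Path // Λ.PGood R b ∧ Λ.PExt b a0}
  | 0 => ⟨a0, h0, pext_refl a0⟩
  | j + 1 =>
    if h : ∃ c : Λ.Path, Λ.PGood R c ∧ Λ.PExt c (chainF Λ R f a0 h0 j).1 ∧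
        ∃ τ ∈ (f (Nat.unpair j).1).2,
          ∃ hτ : Λ.src (Λ.ptrunc (chainF Λ R f a0 h0 j).1 (f (Nat.unpair j).1).1) = Λ.rng τ,
            Λ.PExt c (Λ.comp (Λ.ptrunc (chainF Λ R f a0 h0 j).1 (f (Nat.unpair j).1).1) τ hτ) then
      ⟨h.choose, h.choose_spec.1,
        pext_trans h.choose_spec.2.1 (chainF Λ R f a0 h0 j).2.2⟩
    else chainF Λ R f a0 h0 j

lemma chainF_ext_succ (R : Set Λ.Path) (f : ℕ → (Fin k → ℕ) × Finset Λ.Path)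
    (a0 : Λ.Path) (h0 : Λ.PGood R a0) (j : ℕ) :
    Λ.PExt (chainF Λ R f a0 h0 (j + 1)).1 (chainF Λ R f a0 h0 j).1 := by
  rw [chainF]
  split
  · next h => exact h.choose_spec.2.1
  · exact pext_refl _

lemma chainF_mono (R : Set Λ.Path) (f : ℕ → (Fin k → ℕ) × Finset Λ.Path)
    (a0 : Λ.Path) (h0 : Λ.PGood R a0) {i j : ℕ} (hij : i ≤ j) :
    Λ.PExt (chainF Λ R f a0 h0 j).1 (chainF Λ R f a0 h0 i).1 := by
  induction j with
  | zero => rw [Nat.le_zero.mp hij]; exact pext_refl _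
  | succ j ih =>
      rcases Nat.lt_or_ge i (j+1) with h | h
      · exact pext_trans (chainF_ext_succ R f a0 h0 j) (ih (Nat.lt_succ_iff.mp h))
      · rw [Nat.le_antisymm hij h]; exact pext_refl _

lemma chainF_succ_spec (R : Set Λ.Path) (f : ℕ → (Fin k → ℕ) × Finset Λ.Path)
    (a0 : Λ.Path) (h0 : Λ.PGood R a0) (j : ℕ)
    (h : ∃ c : Λ.Path, Λ.PGood R c ∧ Λ.PExt c (chainF Λ R f a0 h0 j).1 ∧
        ∃ τ ∈ (f (Nat.unpair j).1).2,
          ∃ hτ : Λ.src (Λ.ptrunc (chainF Λ R f a0 h0 j).1 (f (Nat.unpair j).1).1) = Λ.rng τ,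
            Λ.PExt c (Λ.comp (Λ.ptrunc (chainF Λ R f a0 h0 j).1 (f (Nat.unpair j).1).1) τ hτ)) :
    ∃ τ ∈ (f (Nat.unpair j).1).2,
      ∃ hτ : Λ.src (Λ.ptrunc (chainF Λ R f a0 h0 j).1 (f (Nat.unpair j).1).1) = Λ.rng τ,
        Λ.PExt (chainF Λ R f a0 h0 (j + 1)).1
          (Λ.comp (Λ.ptrunc (chainF Λ R f a0 h0 j).1 (f (Nat.unpair j).1).1) τ hτ) := by
  rw [chainF, dif_pos h]
  exact h.choose_spec.2.2

/-- Existence of a boundary path all of whose initial segments are good. -/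
lemma exists_boundary_good (hfa : Λ.FinitelyAligned) (R : Set Λ.Path) (a0 : Λ.Path)
    (h0 : Λ.PGood R a0) :
    ∃ x : BoundaryPath Λ, ∀ n, LeDeg x.bdeg n → Λ.PGood R (x.seg n) := by
  classical
  haveI : Countable Λ.Path := Λ.countable
  haveI : Nonempty ((Fin k → ℕ) × Finset Λ.Path) := ⟨(0, ∅)⟩
  obtain ⟨f, hf⟩ := exists_surjective_nat ((Fin k → ℕ) × Finset Λ.Path)
  set A := chainF Λ R f a0 h0 with hA
  have hmono : ∀ {i j : ℕ}, i ≤ j → Λ.PExt (A j).1 (A i).1 := fun hij =>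
    chainF_mono R f a0 h0 hij
  have hdegmono : ∀ {i j : ℕ}, i ≤ j → Λ.deg (A i).1 ≤ Λ.deg (A j).1 := fun hij =>
    pext_deg_le (hmono hij)
  set bdeg : Fin k → ℕ∞ := fun i => ⨆ j, ((Λ.deg (A j).1 i : ℕ∞)) with hbdeg
  have hLeDeg_of : ∀ (n : Fin k → ℕ) (j : ℕ), n ≤ Λ.deg (A j).1 → LeDeg bdeg n := by
    intro n j h i
    calc ((n i : ℕ∞)) ≤ ((Λ.deg (A j).1 i : ℕ∞)) := by exact_mod_cast h i
    _ ≤ bdeg i := le_iSup (fun j => ((Λ.deg (A j).1 i : ℕ∞))) j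
  have hstage : ∀ n : Fin k → ℕ, LeDeg bdeg n → ∃ j, n ≤ Λ.deg (A j).1 := by
    intro n hn
    have hex : ∀ i, ∃ j, n i ≤ Λ.deg (A j).1 i := by
      intro i
      by_contra hcn
      push_neg at hcn
      have hb : bdeg i ≤ ((n i - 1 : ℕ) : ℕ∞) :=
        iSup_le fun j => by exact_mod_cast Nat.le_pred_of_lt (hcn j)
      have h1 := (hn i).trans hb
      rw [Nat.cast_le] at h1
      have h2 := hcn 0
      omega
    choose jf hjf using hex
    refine ⟨Finset.univ.sup jf, fun i => (hjf i).trans ?_⟩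
    exact hdegmono (Finset.le_sup (Finset.mem_univ i)) i
  set seg : (Fin k → ℕ) → Λ.Path := fun n =>
    if h : ∃ j, n ≤ Λ.deg (A j).1 then Λ.ptrunc (A h.choose).1 n else Λ.rng a0
    with hseg
  have hseg_eq : ∀ (n : Fin k → ℕ) (j : ℕ), n ≤ Λ.deg (A j).1 →
      seg n = Λ.ptrunc (A j).1 n := by
    intro n j h
    have hex : ∃ j, n ≤ Λ.deg (A j).1 := ⟨j, h⟩
    rw [hseg]
    simp only [dif_pos hex]
    have h0' := hex.choose_spec
    have e1 : Λ.ptrunc (A (max hex.choose j)).1 n = Λ.ptrunc (A hex.choose).1 n :=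
      ptrunc_stable (hmono (le_max_left _ _)) h0'
    have e2 : Λ.ptrunc (A (max hex.choose j)).1 n = Λ.ptrunc (A j).1 n :=
      ptrunc_stable (hmono (le_max_right _ _)) h
    rw [← e1, e2]
  have hseg0 : seg 0 = Λ.rng a0 := by
    have h00 : (0 : Fin k → ℕ) ≤ Λ.deg (A 0).1 := zero_le
    rw [hseg_eq 0 0 h00, ptrunc_zero]
    have : (A 0).1 = a0 := rfl
    rw [this]
  have hgood : ∀ n, (∃ j, n ≤ Λ.deg (A j).1) → Λ.PGood R (seg n) := by
    rintro n ⟨j, hj⟩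
    rw [hseg_eq n j hj]
    exact pgood_of_pext (A j).2.1 (pext_ptrunc hj)
  refine ⟨⟨bdeg, seg, ?_, ?_, ?_, ?_, ?_⟩, ?_⟩
  · -- deg_seg
    intro n hn
    obtain ⟨j, hj⟩ := hstage n hn
    rw [hseg_eq n j hj]
    exact deg_ptrunc hj
  · -- rng_seg
    intro n hn
    obtain ⟨j, hj⟩ := hstage n hn
    rw [hseg_eq n j hj, hseg0]
    have e1 : Λ.rng (A j).1 = Λ.rng (Λ.ptrunc (A j).1 n) := pext_rng (pext_ptrunc hj)
    rw [← e1]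
    exact pext_rng (A j).2.2
  · -- seg_comp
    intro m n hmn
    obtain ⟨j, hj⟩ := hstage (m + n) hmn
    have hm : m ≤ Λ.deg (A j).1 := le_trans le_self_add hj
    have hdegt : Λ.deg (Λ.ptrunc (A j).1 (m + n)) = m + n := deg_ptrunc hj
    obtain ⟨p, hp⟩ := (Λ.factor (Λ.ptrunc (A j).1 (m + n)) m n hdegt).exists
    obtain ⟨hsrc, hd1, hd2, heqf⟩ := hp
    have hw1 : Λ.ptrunc (A j).1 m = p.1 := by
      exact ptrunc_eq hd1 (pext_trans (pext_ptrunc hj) ⟨p.2, hsrc, heqf.symm⟩)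
    rw [hseg_eq (m + n) j hj, hseg_eq m j hm, hw1]
    exact ⟨p.2, hsrc, hd2, heqf.symm⟩
  · -- seg_junk
    intro n hn
    have hnex : ¬ ∃ j, n ≤ Λ.deg (A j).1 := by
      rintro ⟨j, hj⟩
      exact hn (hLeDeg_of n j hj)
    rw [hseg0]
    simp only [hseg]
    exact dif_neg hnex
  · -- boundary
    intro n hLe X hXfin hXprop hexh
    obtain ⟨j0, hj0⟩ := hstage n hLe
    obtain ⟨c0, hc0⟩ := hf (n, hXfin.toFinset)
    set j := Nat.pair c0 j0 with hj
    have hjj0 : j0 ≤ j := Nat.right_le_pair c0 j0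
    have hnj : n ≤ Λ.deg (A j).1 := le_trans hj0 (hdegmono hjj0)
    have hsegn : seg n = Λ.ptrunc (A j).1 n := hseg_eq n j hnj
    obtain ⟨q, hq, hbq⟩ := pext_ptrunc hnj
    have hexh' : Λ.Exhaustive (Λ.src (Λ.ptrunc (A j).1 n)) X := by
      rw [← hsegn]; exact hexh
    have hGb : Λ.PGood R (Λ.comp (Λ.ptrunc (A j).1 n) q hq) := by
      rw [← hbq]; exact (A j).2.1
    obtain ⟨τg, hτgX, hτg, c, hGc, hcb, hcτ⟩ := pgood_step hfa hq hGb hXfin hexh'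
    have hcond : ∃ c : Λ.Path, Λ.PGood R c ∧ Λ.PExt c (A j).1 ∧
        ∃ τ ∈ (f (Nat.unpair j).1).2,
          ∃ hτ : Λ.src (Λ.ptrunc (A j).1 (f (Nat.unpair j).1).1) = Λ.rng τ,
            Λ.PExt c (Λ.comp (Λ.ptrunc (A j).1 (f (Nat.unpair j).1).1) τ hτ) := by
      rw [hj, Nat.unpair_pair, hc0]
      refine ⟨c, hGc, ?_, τg, by rw [Set.Finite.mem_toFinset]; exact hτgX, hτg, hcτ⟩
      rw [hbq]; exact hcb
    have hres := chainF_succ_spec R f a0 h0 j hcond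
    rw [Nat.unpair_pair, hc0] at hres
    obtain ⟨τ, hτmem, hτ, hext⟩ := hres
    have hτX : τ ∈ X := by rwa [Set.Finite.mem_toFinset] at hτmem
    have hdegwτ : Λ.deg (Λ.comp (Λ.ptrunc (A j).1 n) τ hτ) = n + Λ.deg τ := by
      rw [Λ.deg_comp, deg_ptrunc hnj]
    have hdegge : n + Λ.deg τ ≤ Λ.deg (A (j + 1)).1 := by
      have := pext_deg_le hext
      rwa [hdegwτ] at this
    refine ⟨τ, hτX, hLeDeg_of _ (j + 1) hdegge, hsegn.symm ▸ hτ, ?_⟩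
    rw [hseg_eq _ (j + 1) hdegge]
    have hfin : Λ.ptrunc (A (j + 1)).1 (n + Λ.deg τ) = Λ.comp (Λ.ptrunc (A j).1 n) τ hτ :=
      ptrunc_eq hdegwτ hext
    rw [hfin]
    exact (comp_cast_left hsegn (hsegn ▸ hτ) hτ).symm
  · -- all segments good
    intro n hn
    exact hgood n (hstage n hn)

end KGraph

section SSLemmas

variable {k : ℕ} {G : Type} [Group G] {Λ : KGraph k}

open KGraph

lemma phi_one (SS : SelfSimilar k G Λ) (μ : Λ.Path) : SS.φ 1 μ = 1 := by
  have h := SS.φ_mul 1 1 μ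
  rw [one_mul, SS.act_one] at h
  exact left_eq_mul.mp h

lemma act_inv_act (SS : SelfSimilar k G Λ) (g : G) (μ : Λ.Path) :
    SS.act g⁻¹ (SS.act g μ) = μ := by
  rw [← SS.act_mul, inv_mul_cancel, SS.act_one]

/-- Rigidity: every member of an idempotent of `S_{G,Λ}` is of the form
`(a, 1, a)`. -/
lemma idem_diag (SS : SelfSimilar k G Λ) {E : Set (Λ.Path × G × Λ.Path)}
    (hE : IsIdem SS E) {a : Λ.Path} {g : G} {b : Λ.Path} (ht : (a, g, b) ∈ E) :
    b = a ∧ g = 1 := by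
  obtain ⟨⟨hfin, hsrc, horth⟩, hmul⟩ := hE
  have ht2 : (a, g, b) ∈ smul SS E E := by rw [hmul]; exact ht
  obtain ⟨μ, g1, ν, ξ, h, η, α, β, hm1, hm2, hlm, h1, h2, heq⟩ := ht2
  simp only [Prod.mk.injEq] at heq
  obtain ⟨ha, hg, hb⟩ := heq
  have hext1 : Λ.PExt a μ := ⟨SS.act g1 α, h1, ha⟩
  have hne1 : (Λ.lmin a μ).Nonempty := lmin_nonempty_of_common (pext_refl a) hext1
  have he1 : (a, g, b) = (μ, g1, ν) := by
    by_contra hne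
    have h0 := (horth _ ht _ hm1 hne).1
    rw [h0] at hne1
    exact Set.not_nonempty_empty hne1
  have hext2 : Λ.PExt b η := ⟨SS.act h⁻¹ β, h2, hb⟩
  have hne2 : (Λ.lmin b η).Nonempty := lmin_nonempty_of_common (pext_refl b) hext2
  have he2 : (a, g, b) = (ξ, h, η) := by
    by_contra hne
    have h0 := (horth _ ht _ hm2 hne).2
    rw [h0] at hne2
    exact Set.not_nonempty_empty hne2
  simp only [Prod.mk.injEq] at he1 he2
  obtain ⟨e1, e2, e3⟩ := he1
  obtain ⟨e4, e5, e6⟩ := he2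
  subst e1; subst e2; subst e3; subst e4; subst e5; subst e6
  -- now: ha : a = comp a (act g α), hb : b = comp b (act g⁻¹ β),
  -- hg : g = φ g α * φ g (act g⁻¹ β), hlm : (α, β) ∈ lmin b a
  obtain ⟨l1, l2, lc, ld⟩ := hlm
  have hdα : Λ.deg (SS.act g α) = 0 := by
    have hd := Λ.deg_comp a (SS.act g α) h1
    rw [← ha] at hd
    exact left_eq_add.mp hd
  have hdβ : Λ.deg (SS.act g⁻¹ β) = 0 := by
    have hd := Λ.deg_comp b (SS.act g⁻¹ β) h2
    rw [← hb] at hd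
    exact left_eq_add.mp hd
  have hα0 : Λ.deg α = 0 := by rw [SS.deg_act] at hdα; exact hdα
  have hβ0 : Λ.deg β = 0 := by rw [SS.deg_act] at hdβ; exact hdβ
  have hαsrc : α = Λ.src b := by
    rw [l1, Λ.rng_vtx α hα0]
  have hβsrc : β = Λ.src a := by
    rw [l2, Λ.rng_vtx β hβ0]
  have hba : b = a := by
    have hcb : Λ.comp b α l1 = b := by
      rw [comp_vertex_eq (hw := hαsrc)]
    have hca : Λ.comp a β l2 = a := by
      rw [comp_vertex_eq (hw := hβsrc)]
    rw [← hcb, lc, hca]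
  refine ⟨hba, ?_⟩
  have hφ1 : SS.φ g α = g := by
    rw [SS.φ_vtx g α hα0]
  have hφ2 : SS.φ g (SS.act g⁻¹ β) = g := by
    rw [SS.φ_vtx g _ hdβ]
  rw [hφ1, hφ2] at hg
  exact left_eq_mul.mp hg

lemma pext_of_iota_smul (SS : SelfSimilar k G Λ) {E : Set (Λ.Path × G × Λ.Path)}
    {gam : Λ.Path} (hsm : smul SS (iota Λ G gam) E = E) {t : Λ.Path × G × Λ.Path}
    (ht : t ∈ E) : Λ.PExt t.1 gam := by
  rw [← hsm] at ht
  obtain ⟨μ, g1, ν, ξ, h, η, α, β, hm1, hm2, hlm, h1, h2, heq⟩ := ht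
  rw [iota, Set.mem_singleton_iff] at hm1
  simp only [Prod.mk.injEq] at hm1
  obtain ⟨e1, e2, e3⟩ := hm1
  have hPE : Λ.PExt t.1 μ := ⟨SS.act g1 α, h1, congrArg Prod.fst heq⟩
  rwa [e1] at hPE

/-- The key membership: `(μ, 1, μ) ∈ Fᵢ ι_λ Fᵢ*` for the singleton
`Fᵢ = {(μ, g₀⁻¹, λp)}`. -/
lemma key_mem (SS : SelfSimilar k G Λ) (lam μ p : Λ.Path) (g0 : G)
    (hcm : Λ.src lam = Λ.rng p) (hs : Λ.src p = SS.act g0 (Λ.src μ)) :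
    (μ, (1 : G), μ) ∈ smul SS
      (smul SS ({(μ, g0⁻¹, Λ.comp lam p hcm)} : Set (Λ.Path × G × Λ.Path)) (iota Λ G lam))
      (sstar ({(μ, g0⁻¹, Λ.comp lam p hcm)} : Set (Λ.Path × G × Λ.Path))) := by
  set ν0 := Λ.comp lam p hcm with hν0
  have hsν : Λ.src ν0 = Λ.src p := Λ.src_comp lam p hcm
  have hvtxν : Λ.deg (Λ.src ν0) = 0 := Λ.deg_src ν0
  have hback : SS.act g0⁻¹ (Λ.src ν0) = Λ.src μ := by
    rw [hsν, hs, act_inv_act]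
  have hdegb : Λ.deg (SS.act g0⁻¹ (Λ.src ν0)) = 0 := by
    rw [SS.deg_act]; exact hvtxν
  have h1 : Λ.src μ = Λ.rng (SS.act g0⁻¹ (Λ.src ν0)) := by
    rw [Λ.rng_vtx _ hdegb, hback]
  have h1' : Λ.src ν0 = Λ.rng (Λ.src ν0) := (Λ.rng_src ν0).symm
  have hdν : Λ.deg ν0 + Λ.deg (Λ.src ν0) = Λ.deg ν0 ⊔ Λ.deg ν0 := by
    rw [Λ.deg_src, add_zero, sup_idem]
  have hlamle : Λ.deg lam ≤ Λ.deg ν0 := by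
    rw [hν0, Λ.deg_comp]; exact le_self_add
  -- Step 1 : (μ, g0⁻¹, ν0) ∈ Fi ⬝ ι_lam
  have step1 : (μ, g0⁻¹, ν0) ∈ smul SS
      ({(μ, g0⁻¹, ν0)} : Set (Λ.Path × G × Λ.Path)) (iota Λ G lam) := by
    have hlm : ((Λ.src ν0, p) : Λ.Path × Λ.Path) ∈ Λ.lmin ν0 lam := by
      refine ⟨h1', hcm, ?_, ?_⟩
      · exact Λ.comp_src_id ν0 h1'
      · rw [Λ.deg_src, add_zero]
        exact (sup_eq_left.mpr hlamle).symm
    have hh2 : Λ.src lam = Λ.rng (SS.act (1 : G)⁻¹ p) := by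
      rw [inv_one, SS.act_one]; exact hcm
    refine ⟨μ, g0⁻¹, ν0, lam, 1, lam, Λ.src ν0, p, rfl, rfl, hlm, h1, hh2, ?_⟩
    have e1 : Λ.comp μ (SS.act g0⁻¹ (Λ.src ν0)) h1 = μ := comp_vertex_eq hback h1
    have e2 : SS.φ g0⁻¹ (Λ.src ν0) * SS.φ 1 (SS.act (1 : G)⁻¹ p) = g0⁻¹ := by
      rw [SS.φ_vtx _ _ hvtxν, phi_one, mul_one]
    have e3 : Λ.comp lam (SS.act (1 : G)⁻¹ p) hh2 = ν0 :=
      comp_cast (by rw [inv_one, SS.act_one]) hh2 hcm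
    rw [e1, e2, e3]
  -- Step 2 : (ν0, g0, μ) ∈ sstar Fi
  have step2 : (ν0, g0, μ) ∈ sstar ({(μ, g0⁻¹, ν0)} : Set (Λ.Path × G × Λ.Path)) := by
    show ((ν0, g0, μ).2.2, (ν0, g0, μ).2.1⁻¹, (ν0, g0, μ).1)
        ∈ ({(μ, g0⁻¹, ν0)} : Set (Λ.Path × G × Λ.Path))
    simp only [Set.mem_singleton_iff, Prod.mk.injEq]
  -- Step 3
  have hlm2 : ((Λ.src ν0, Λ.src ν0) : Λ.Path × Λ.Path) ∈ Λ.lmin ν0 ν0 :=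
    ⟨h1', h1', rfl, hdν⟩
  refine ⟨μ, g0⁻¹, ν0, ν0, g0, μ, Λ.src ν0, Λ.src ν0, step1, step2, hlm2, h1, h1, ?_⟩
  have e1 : Λ.comp μ (SS.act g0⁻¹ (Λ.src ν0)) h1 = μ := comp_vertex_eq hback h1
  have e2 : SS.φ g0⁻¹ (Λ.src ν0) * SS.φ g0 (SS.act g0⁻¹ (Λ.src ν0)) = 1 := by
    rw [SS.φ_vtx _ _ hvtxν, SS.φ_vtx _ _ hdegb, inv_mul_cancel]
  rw [e1, e2]

end SSLemmas
/-- if `(G,Λ)` is `G`-cofinal, then for all idempotents `ι_λ`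
and `ι_γ` there exist finitely many `F₁,…,F_l ∈ S_{G,Λ}` such that
`{Fᵢ ι_λ Fᵢ*}` is an outer cover for `ι_γ`. -/
theorem stmt18 (SS : SelfSimilar k G Λ) (hfa : Λ.FinitelyAligned)
    (hcof : GCofinal SS) (lam gam : Λ.Path) :
    ∃ C : Set (Set (Λ.Path × G × Λ.Path)), C.Finite ∧
      (∀ Fi ∈ C, IsElem SS Fi) ∧
      ∀ E', IsIdem SS E' → smul SS (iota Λ G gam) E' = E' → E' ≠ ∅ →
        ∃ Fi ∈ C,
          smul SS E' (smul SS (smul SS Fi (iota Λ G lam)) (sstar Fi)) ≠ ∅ := by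
  classical
  set R : Set Λ.Path :=
    {μ | ∃ (g : G) (p : Λ.Path), Λ.rng p = Λ.src lam ∧ Λ.src p = SS.act g (Λ.src μ)}
    with hR
  by_cases hgood : Λ.PGood R gam
  · -- Good case is impossible by G-cofinality
    obtain ⟨x, hx⟩ := KGraph.exists_boundary_good hfa R gam hgood
    obtain ⟨n, hn, g, p, hp, hs⟩ := hcof (Λ.src lam) (Λ.deg_src lam) x
    exact absurd (hx n hn) (KGraph.not_pgood_of_mem ⟨g, p, hp, hs⟩)
  · obtain ⟨M, hMfin, hMR, hMcov⟩ := not_not.mp hgood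
    choose! g0 p0 hp0 hs0 using fun μ (h : μ ∈ M) => hMR h
    set F0 : Λ.Path → Set (Λ.Path × G × Λ.Path) := fun μ =>
      if h : Λ.src lam = Λ.rng (p0 μ) then {(μ, (g0 μ)⁻¹, Λ.comp lam (p0 μ) h)} else ∅
      with hF0
    refine ⟨F0 '' M, hMfin.image F0, ?_, ?_⟩
    · rintro Fi ⟨μ, hμ, rfl⟩
      have hcm : Λ.src lam = Λ.rng (p0 μ) := (hp0 μ hμ).symm
      simp only [hF0, dif_pos hcm]
      refine ⟨Set.finite_singleton _, ?_, ?_⟩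
      · rintro t ht
        rw [Set.mem_singleton_iff] at ht
        subst ht
        show Λ.src μ = SS.act (g0 μ)⁻¹ (Λ.src (Λ.comp lam (p0 μ) hcm))
        rw [Λ.src_comp, hs0 μ hμ, act_inv_act]
      · rintro t ht u hu hne
        rw [Set.mem_singleton_iff] at ht hu
        rw [ht, hu] at hne
        exact absurd rfl hne
    · rintro E' hidem hsm hne
      obtain ⟨t, htE⟩ := Set.nonempty_iff_ne_empty.mpr hne
      obtain ⟨a, g, b⟩ := t
      obtain ⟨hb1, hg1⟩ := idem_diag SS hidem htE
      subst hg1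
      rw [hb1] at htE
      have hext : Λ.PExt a gam := pext_of_iota_smul SS hsm htE
      obtain ⟨μ, hμM, e, hea, heμ⟩ := hMcov a hext
      obtain ⟨⟨α, β⟩, hαβ⟩ := KGraph.lmin_nonempty_of_common hea heμ
      obtain ⟨l1, l2, lc, ld⟩ := hαβ
      refine ⟨F0 μ, ⟨μ, hμM, rfl⟩, ?_⟩
      have hcm : Λ.src lam = Λ.rng (p0 μ) := (hp0 μ hμM).symm
      have hFμ : F0 μ = {(μ, (g0 μ)⁻¹, Λ.comp lam (p0 μ) hcm)} := by
        simp only [hF0, dif_pos hcm]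
      rw [hFμ]
      have hmem := key_mem SS lam μ (p0 μ) (g0 μ) hcm (hs0 μ hμM)
      have k1 : Λ.src a = Λ.rng (SS.act (1 : G) α) := by
        rw [SS.act_one]; exact l1
      have k2 : Λ.src μ = Λ.rng (SS.act (1 : G)⁻¹ β) := by
        rw [inv_one, SS.act_one]; exact l2
      apply Set.nonempty_iff_ne_empty.mp
      exact ⟨_, a, 1, a, μ, 1, μ, α, β, htE, hmem, ⟨l1, l2, lc, ld⟩, k1, k2, rfl⟩
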